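/- Let R be a rewrite system on T. If for every overlap between two rules of R (of any of the five types) the resulting critical pair resolves, then every critical pair of →_R resolves; in particular →_R is locally confluent, and hence →_R is confluent whenever →_R is additionally Noetherian. -/

import Mathlib

variable {Γ Δ : Type} [Quiver.{0} Δ] {X : Γ → Type} {F : Γ → Δ}

/-- The set `T := ⨆_{B} ⨆_{A} XA × 𝒫(FA, B)` of tagged words `x|p`. -/
def Tagged (X : Γ → Type) (F : Γ → Δ) : Type :=
  Σ (B : Δ) (A : Γ), X A × Quiver.Path (F A) B

namespace Tagged

/-- `τ(x|p) := tgt p`. -/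
abbrev tau (t : Tagged X F) : Δ := t.1

/-- The action `(x|p)·q := x|pq` of a path `q` with `src q = τ t`. -/
def act (t : Tagged X F) {B B' : Δ} (h : t.tau = B) (q : Quiver.Path B B') : Tagged X F :=
  ⟨B', t.2.1, t.2.2.1, Quiver.Path.comp (h ▸ t.2.2.2 : Quiver.Path (F t.2.1) B) q⟩

end Tagged

/-- Pairs of parallel paths (same source and same target). -/
def PathPair (Δ : Type) [Quiver.{0} Δ] : Type :=
  Σ (a b : Δ), Quiver.Path a b × Quiver.Path a b

/-- The reduction relation `→_R` generated by a rewrite system `R = (R_T, R_P)` on `T`. -/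
inductive Red (RT : Set (Tagged X F × Tagged X F)) (RP : Set (PathPair Δ)) :
    Tagged X F → Tagged X F → Prop
  | tag {s u : Tagged X F} {B B' : Δ} (hmem : (s, u) ∈ RT)
      (hs : s.tau = B) (hu : u.tau = B) (q : Quiver.Path B B') :
      Red RT RP (s.act hs q) (u.act hu q)
  | path {s : Tagged X F} {a b B' : Δ} {l r : Quiver.Path a b}
      (hmem : (⟨a, b, (l, r)⟩ : PathPair Δ) ∈ RP)
      (hs : s.tau = a) (q : Quiver.Path b B') :
      Red RT RP (s.act hs (l.comp q)) (s.act hs (r.comp q))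

/-- One-step path rewriting with respect to the two-sided rules `R_P`. -/
def RedPath (RP : Set (PathPair Δ)) {a b : Δ} (p₁ p₂ : Quiver.Path a b) : Prop :=
  ∃ (c d : Δ) (l r : Quiver.Path c d) (u : Quiver.Path a c) (v : Quiver.Path d b),
    (⟨c, d, (l, r)⟩ : PathPair Δ) ∈ RP ∧ p₁ = (u.comp l).comp v ∧ p₂ = (u.comp r).comp v

/-- A pair of elements of `T` resolves if both reduce (in `→*_R`) to a common term. -/
def ResolvesT (RT : Set (Tagged X F × Tagged X F)) (RP : Set (PathPair Δ))
    (t₁ t₂ : Tagged X F) : Prop :=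
  ∃ v, Relation.ReflTransGen (Red RT RP) t₁ v ∧ Relation.ReflTransGen (Red RT RP) t₂ v

/-- A pair of parallel paths resolves if both reduce (via the rules `R_P`)
to a common path. -/
def ResolvesP (RP : Set (PathPair Δ)) {a b : Δ} (p₁ p₂ : Quiver.Path a b) : Prop :=
  ∃ w : Quiver.Path a b,
    Relation.ReflTransGen (fun p q => RedPath RP p q) p₁ w ∧
    Relation.ReflTransGen (fun p q => RedPath RP p q) p₂ w

/-- `(c₁, c₂)` is the critical pair in `T` resulting from an overlap of two rules of `R`,
of types (i), (iv) or (v). -/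
def OverlapPairT (RT : Set (Tagged X F × Tagged X F)) (RP : Set (PathPair Δ))
    (c₁ c₂ : Tagged X F) : Prop :=
  -- type (i): s₁ = s₂·q, resulting pair (u₁, u₂·q)
  (∃ (s₁ u₁ s₂ u₂ : Tagged X F) (B B' : Δ) (h₂ : s₂.tau = B) (hu₂ : u₂.tau = B)
      (q : Quiver.Path B B'),
      (s₁, u₁) ∈ RT ∧ (s₂, u₂) ∈ RT ∧ s₁ = s₂.act h₂ q ∧ c₁ = u₁ ∧ c₂ = u₂.act hu₂ q) ∨
  -- type (iv): s₁·q = s·l, resulting pair (u₁·q, s·r)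
  (∃ (s₁ u₁ s : Tagged X F) (a b B : Δ) (l r : Quiver.Path a b)
      (hs₁ : s₁.tau = B) (hu₁ : u₁.tau = B) (q : Quiver.Path B b) (hs : s.tau = a),
      (s₁, u₁) ∈ RT ∧ (⟨a, b, (l, r)⟩ : PathPair Δ) ∈ RP ∧
      s₁.act hs₁ q = s.act hs l ∧ c₁ = u₁.act hu₁ q ∧ c₂ = s.act hs r) ∨
  -- type (v): s₁ = s·(lq), resulting pair (u₁, s·(rq))
  (∃ (s₁ u₁ s : Tagged X F) (a b B : Δ) (l r : Quiver.Path a b)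
      (hs : s.tau = a) (q : Quiver.Path b B),
      (s₁, u₁) ∈ RT ∧ (⟨a, b, (l, r)⟩ : PathPair Δ) ∈ RP ∧
      s₁ = s.act hs (l.comp q) ∧ c₁ = u₁ ∧ c₂ = s.act hs (r.comp q))

/-- `(c₁, c₂)` is the critical pair of paths resulting from an overlap of two rules
of `R_P`, of type (ii) or (iii). -/
def OverlapPairP (RP : Set (PathPair Δ)) {a b : Δ} (c₁ c₂ : Quiver.Path a b) : Prop :=
  -- type (ii): l₁ = p l₂ q, resulting pair (r₁, p r₂ q)
  (∃ (l₁ r₁ : Quiver.Path a b) (a₂ b₂ : Δ) (l₂ r₂ : Quiver.Path a₂ b₂)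
      (p : Quiver.Path a a₂) (q : Quiver.Path b₂ b),
      (⟨a, b, (l₁, r₁)⟩ : PathPair Δ) ∈ RP ∧ (⟨a₂, b₂, (l₂, r₂)⟩ : PathPair Δ) ∈ RP ∧
      l₁ = (p.comp l₂).comp q ∧ c₁ = r₁ ∧ c₂ = (p.comp r₂).comp q) ∨
  -- type (iii): l₁ q = p l₂, resulting pair (r₁ q, p r₂)
  (∃ (b₁ a₂ : Δ) (l₁ r₁ : Quiver.Path a b₁) (l₂ r₂ : Quiver.Path a₂ b)
      (q : Quiver.Path b₁ b) (p : Quiver.Path a a₂),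
      (⟨a, b₁, (l₁, r₁)⟩ : PathPair Δ) ∈ RP ∧ (⟨a₂, b, (l₂, r₂)⟩ : PathPair Δ) ∈ RP ∧
      l₁.comp q = p.comp l₂ ∧ c₁ = r₁.comp q ∧ c₂ = p.comp r₂)

open Quiver Relation

namespace Tagged

lemma act_act (t : Tagged X F) {B B' B'' : Δ} (h : t.tau = B) (q : Path B B') (q' : Path B' B'') :
    (t.act h q).act rfl q' = t.act h (q.comp q') := by
  obtain ⟨C, A, x, p⟩ := t
  cases h
  simp [act, Path.comp_assoc]; rfl

lemma path_split {a b₁ b₂ c : Δ} (p₁ : Path a b₁) (q₁ : Path b₁ c) (p₂ : Path a b₂)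
    (q₂ : Path b₂ c) (h : p₁.comp q₁ = p₂.comp q₂) (hlen : q₂.length ≤ q₁.length) :
    ∃ m : Path b₁ b₂, p₂ = p₁.comp m ∧ q₁ = m.comp q₂ := by
  induction q₂ with
  | nil => exact ⟨q₁, by simpa using h.symm, by simp⟩
  | cons q₂' e ih =>
    cases q₁ with
    | nil => simp [Path.length] at hlen
    | cons q₁' e₁ =>
      rw [Path.comp_cons, Path.comp_cons] at h
      obtain rfl := Quiver.Path.obj_eq_of_cons_eq_cons h
      obtain rfl := eq_of_heq (Quiver.Path.hom_heq_of_cons_eq_cons h)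
      have h' := eq_of_heq (Quiver.Path.heq_of_cons_eq_cons h)
      simp only [Path.length] at hlen
      obtain ⟨m, hm1, hm2⟩ := ih q₁' h' (by omega)
      exact ⟨m, hm1, by rw [hm2, Path.comp_cons]⟩

lemma act_eq_act {s₁ s₂ : Tagged X F} {B₁ B₂ C : Δ} (h₁ : s₁.tau = B₁) (h₂ : s₂.tau = B₂)
    {q₁ : Path B₁ C} {q₂ : Path B₂ C} (h : s₁.act h₁ q₁ = s₂.act h₂ q₂)
    (hlen : q₂.length ≤ q₁.length) :
    ∃ m : Path B₁ B₂, s₂ = s₁.act h₁ m ∧ q₁ = m.comp q₂ := by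
  obtain ⟨D₁, A₁, x₁, p₁⟩ := s₁
  obtain ⟨D₂, A₂, x₂, p₂⟩ := s₂
  obtain rfl : D₁ = B₁ := h₁
  obtain rfl : D₂ = B₂ := h₂
  have h' : (⟨C, A₁, x₁, p₁.comp q₁⟩ : Tagged X F) = ⟨C, A₂, x₂, p₂.comp q₂⟩ := h
  injection h' with h1 h2
  injection h2 with h1 h2
  subst h1
  rw [heq_eq_eq, Prod.mk.injEq] at h2
  obtain ⟨rfl, hpq⟩ := h2
  obtain ⟨m, hm1, hm2⟩ := path_split p₁ q₁ p₂ q₂ hpq hlen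
  exact ⟨m, by simp [act, hm1]; rfl, hm2⟩

end Tagged


section Main

open Quiver Relation Tagged

variable {RT : Set (Tagged X F × Tagged X F)} {RP : Set (PathPair Δ)}

lemma tau_red {t u : Tagged X F} (h : Red RT RP t u) : t.tau = u.tau := by
  cases h <;> rfl

lemma tau_rtg {t u : Tagged X F} (h : ReflTransGen (Red RT RP) t u) : t.tau = u.tau := by
  induction h with
  | refl => rfl
  | tail _ h ih => exact ih.trans (tau_red h)

lemma red_act {t u : Tagged X F} (h : Red RT RP t u) {B B' : Δ}
    (ht : t.tau = B) (hu : u.tau = B) (q : Path B B') :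
    Red RT RP (t.act ht q) (u.act hu q) := by
  cases h with
  | tag hmem hs hu' q₀ =>
    obtain rfl : _ = B := ht
    erw [act_act, act_act]
    exact Red.tag hmem hs hu' (q₀.comp q)
  | path hmem hs q₀ =>
    obtain rfl : _ = B := ht
    erw [act_act, act_act, Path.comp_assoc, Path.comp_assoc]
    exact Red.path hmem hs (q₀.comp q)

lemma rtg_act {t u : Tagged X F} (h : ReflTransGen (Red RT RP) t u) {B B' : Δ}
    (ht : t.tau = B) (hu : u.tau = B) (q : Path B B') :
    ReflTransGen (Red RT RP) (t.act ht q) (u.act hu q) := by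
  induction h with
  | refl => exact .refl
  | @tail m u h₁ h₂ ih =>
    exact (ih ((tau_red h₂).trans hu)).tail (red_act h₂ ((tau_red h₂).trans hu) hu q)

lemma redpath_act {a b B' : Δ} {p₁ p₂ : Path a b} (h : RedPath RP p₁ p₂)
    (t : Tagged X F) (ht : t.tau = a) (q : Path b B') :
    Red RT RP (t.act ht (p₁.comp q)) (t.act ht (p₂.comp q)) := by
  obtain ⟨c, d, l, r, u, v, hmem, rfl, rfl⟩ := h
  have h1 := Red.path (s := t.act ht u) (RT := RT) hmem rfl (v.comp q)
  erw [act_act, act_act] at h1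
  have e : ∀ (z : Path c d), u.comp (z.comp (v.comp q)) = ((u.comp z).comp v).comp q := by
    intro z; simp [Path.comp_assoc]
  rw [e l, e r] at h1
  exact h1

lemma rtg_redpath_act {a b B' : Δ} {p₁ p₂ : Path a b}
    (h : ReflTransGen (RedPath RP) p₁ p₂)
    (t : Tagged X F) (ht : t.tau = a) (q : Path b B') :
    ReflTransGen (Red RT RP) (t.act ht (p₁.comp q)) (t.act ht (p₂.comp q)) := by
  induction h with
  | refl => exact .refl
  | tail _ h₂ ih => exact ih.tail (redpath_act h₂ t ht q)

lemma resolvesT_symm {t u : Tagged X F} (h : ResolvesT RT RP t u) : ResolvesT RT RP u t := by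
  obtain ⟨v, h1, h2⟩ := h; exact ⟨v, h2, h1⟩

/-- tag/tag peak, with `q₂` the shorter context. -/
lemma peak_tag_tag (hT : ∀ c₁ c₂ : Tagged X F, OverlapPairT RT RP c₁ c₂ → ResolvesT RT RP c₁ c₂)
    {s₁ u₁ s₂ u₂ : Tagged X F} {B₁ B₂ C : Δ}
    (hs₁ : s₁.tau = B₁) (hu₁ : u₁.tau = B₁) (hs₂ : s₂.tau = B₂) (hu₂ : u₂.tau = B₂)
    (q₁ : Path B₁ C) (q₂ : Path B₂ C)
    (hm₁ : (s₁, u₁) ∈ RT) (hm₂ : (s₂, u₂) ∈ RT)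
    (heq : s₁.act hs₁ q₁ = s₂.act hs₂ q₂) (hlen : q₂.length ≤ q₁.length) :
    ResolvesT RT RP (u₁.act hu₁ q₁) (u₂.act hu₂ q₂) := by
  obtain ⟨m, hs2, rfl⟩ := act_eq_act hs₁ hs₂ heq hlen
  have hov : OverlapPairT RT RP u₂ (u₁.act hu₁ m) :=
    Or.inl ⟨s₂, u₂, s₁, u₁, B₁, B₂, hs₁, hu₁, m, hm₂, hm₁, hs2, rfl, rfl⟩
  obtain ⟨v, hv2, hv1⟩ := hT _ _ hov
  refine ⟨v.act ((tau_rtg hv2).symm.trans hu₂) q₂, ?_, ?_⟩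
  · rw [← act_act]
    exact rtg_act hv1 rfl _ q₂
  · exact rtg_act hv2 hu₂ _ q₂

/-- tag/path peak. -/
lemma peak_tag_path (hT : ∀ c₁ c₂ : Tagged X F, OverlapPairT RT RP c₁ c₂ → ResolvesT RT RP c₁ c₂)
    {s₁ u₁ s : Tagged X F} {B₁ a b C : Δ}
    (hs₁ : s₁.tau = B₁) (hu₁ : u₁.tau = B₁) (hs : s.tau = a)
    (q₁ : Path B₁ C) {l r : Path a b} (q₂ : Path b C)
    (hm₁ : (s₁, u₁) ∈ RT) (hm₂ : (⟨a, b, (l, r)⟩ : PathPair Δ) ∈ RP)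
    (heq : s₁.act hs₁ q₁ = s.act hs (l.comp q₂)) :
    ResolvesT RT RP (u₁.act hu₁ q₁) (s.act hs (r.comp q₂)) := by
  rw [← act_act] at heq
  rcases le_total q₂.length q₁.length with hlen | hlen
  · -- type (iv)
    obtain ⟨m, hsl, rfl⟩ := act_eq_act hs₁ rfl heq hlen
    have hov : OverlapPairT RT RP (u₁.act hu₁ m) (s.act hs r) :=
      Or.inr (Or.inl ⟨s₁, u₁, s, a, b, B₁, l, r, hs₁, hu₁, m, hs, hm₁, hm₂, hsl.symm, rfl, rfl⟩)
    obtain ⟨v, hv1, hv2⟩ := hT _ _ hov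
    refine ⟨v.act ((tau_rtg hv1).symm.trans rfl) q₂, ?_, ?_⟩
    · erw [← act_act]; exact rtg_act hv1 rfl _ q₂
    · erw [← act_act]; exact rtg_act hv2 rfl _ q₂
  · -- type (v)
    obtain ⟨m, hs1, rfl⟩ := act_eq_act rfl hs₁ heq.symm hlen
    erw [act_act] at hs1
    have hov : OverlapPairT RT RP u₁ (s.act hs (r.comp m)) :=
      Or.inr (Or.inr ⟨s₁, u₁, s, a, b, _, l, r, hs, m, hm₁, hm₂, hs1, rfl, rfl⟩)
    obtain ⟨v, hv1, hv2⟩ := hT _ _ hov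
    refine ⟨v.act ((tau_rtg hv1).symm.trans hu₁) q₁, ?_, ?_⟩
    · exact rtg_act hv1 hu₁ _ q₁
    · have : s.act hs (r.comp (m.comp q₁)) = (s.act hs (r.comp m)).act rfl q₁ := by
        rw [act_act]; erw [Path.comp_assoc]; rfl
      rw [this]
      exact rtg_act hv2 rfl _ q₁

/-- path/path peak, with the first redex starting no later than the second. -/
lemma peak_path_path
    (hP : ∀ (a b : Δ) (c₁ c₂ : Quiver.Path a b), OverlapPairP RP c₁ c₂ → ResolvesP RP c₁ c₂)
    {s s' : Tagged X F} {a₁ b₁ a₂ b₂ C : Δ}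
    (hs : s.tau = a₁) (hs' : s'.tau = a₂)
    {l₁ r₁ : Path a₁ b₁} {l₂ r₂ : Path a₂ b₂} (q₁ : Path b₁ C) (q₂ : Path b₂ C)
    (hm₁ : (⟨a₁, b₁, (l₁, r₁)⟩ : PathPair Δ) ∈ RP)
    (hm₂ : (⟨a₂, b₂, (l₂, r₂)⟩ : PathPair Δ) ∈ RP)
    (heq : s.act hs (l₁.comp q₁) = s'.act hs' (l₂.comp q₂))
    (hlen : (l₂.comp q₂).length ≤ (l₁.comp q₁).length) :
    ResolvesT RT RP (s.act hs (r₁.comp q₁)) (s'.act hs' (r₂.comp q₂)) := by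
  obtain ⟨m, hs'', hq⟩ := act_eq_act hs hs' heq hlen
  rw [← Path.comp_assoc] at hq
  rcases le_total q₂.length q₁.length with hlen2 | hlen2
  · -- type (iii)
    obtain ⟨m', hm'1, rfl⟩ := path_split l₁ q₁ (m.comp l₂) q₂ hq hlen2
    have hov : OverlapPairP RP (r₁.comp m') (m.comp r₂) :=
      Or.inr ⟨b₁, a₂, l₁, r₁, l₂, r₂, m', m, hm₁, hm₂, hm'1.symm, rfl, rfl⟩
    obtain ⟨w, hw1, hw2⟩ := hP _ _ _ _ hov
    refine ⟨s.act hs (w.comp q₂), ?_, ?_⟩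
    · have e : r₁.comp (m'.comp q₂) = (r₁.comp m').comp q₂ := by rw [Path.comp_assoc]
      rw [e]
      exact rtg_redpath_act hw1 s hs q₂
    · subst hs''
      erw [act_act]
      have e : m.comp (r₂.comp q₂) = (m.comp r₂).comp q₂ := by rw [Path.comp_assoc]
      rw [e]
      exact rtg_redpath_act hw2 s hs q₂
  · -- type (ii)
    obtain ⟨m', hm'1, rfl⟩ := path_split (m.comp l₂) q₂ l₁ q₁ hq.symm hlen2
    have hov : OverlapPairP RP r₁ ((m.comp r₂).comp m') :=
      Or.inl ⟨l₁, r₁, a₂, b₂, l₂, r₂, m, m', hm₁, hm₂, hm'1, rfl, rfl⟩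
    obtain ⟨w, hw1, hw2⟩ := hP _ _ _ _ hov
    refine ⟨s.act hs (w.comp q₁), ?_, ?_⟩
    · exact rtg_redpath_act hw1 s hs q₁
    · subst hs''
      erw [act_act]
      have e : m.comp (r₂.comp (m'.comp q₁)) = ((m.comp r₂).comp m').comp q₁ := by
        simp [Path.comp_assoc]
      rw [e]
      exact rtg_redpath_act hw2 s hs q₁

lemma red_inv {t u : Tagged X F} (h : Red RT RP t u) :
    (∃ (s v : Tagged X F) (B B' : Δ) (hs : s.tau = B) (hv : v.tau = B) (q : Path B B'),
      (s, v) ∈ RT ∧ t = s.act hs q ∧ u = v.act hv q) ∨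
    (∃ (s : Tagged X F) (a b B' : Δ) (l r : Path a b) (hs : s.tau = a) (q : Path b B'),
      (⟨a, b, (l, r)⟩ : PathPair Δ) ∈ RP ∧ t = s.act hs (l.comp q) ∧ u = s.act hs (r.comp q)) := by
  cases h with
  | tag hmem hs hu q => exact Or.inl ⟨_, _, _, _, hs, hu, q, hmem, rfl, rfl⟩
  | path hmem hs q => exact Or.inr ⟨_, _, _, _, _, _, hs, q, hmem, rfl, rfl⟩

lemma local_confluence (hT : ∀ c₁ c₂ : Tagged X F, OverlapPairT RT RP c₁ c₂ → ResolvesT RT RP c₁ c₂)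
    (hP : ∀ (a b : Δ) (c₁ c₂ : Quiver.Path a b), OverlapPairP RP c₁ c₂ → ResolvesP RP c₁ c₂)
    {t u₁ u₂ : Tagged X F} (h₁ : Red RT RP t u₁) (h₂ : Red RT RP t u₂) :
    ResolvesT RT RP u₁ u₂ := by
  rcases red_inv h₁ with ⟨s₁, v₁, B₁, C₁, hs₁, hu₁, q₁, hm₁, rfl, rfl⟩ |
    ⟨s₁, a₁, b₁, C₁, l₁, r₁, hs₁, q₁, hm₁, rfl, rfl⟩ <;>
  rcases red_inv h₂ with ⟨s₂, v₂, B₂, C₂, hs₂, hu₂, q₂, hm₂, heq, rfl⟩ |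
    ⟨s₂, a₂, b₂, C₂, l₂, r₂, hs₂, q₂, hm₂, heq, rfl⟩ <;>
    obtain rfl : C₁ = C₂ := congrArg Sigma.fst heq
  · rcases le_total q₂.length q₁.length with hlen | hlen
    · exact peak_tag_tag hT hs₁ hu₁ hs₂ hu₂ q₁ q₂ hm₁ hm₂ heq hlen
    · exact resolvesT_symm (peak_tag_tag hT hs₂ hu₂ hs₁ hu₁ q₂ q₁ hm₂ hm₁ heq.symm hlen)
  · exact peak_tag_path hT hs₁ hu₁ hs₂ q₁ q₂ hm₁ hm₂ heq
  · exact resolvesT_symm (peak_tag_path hT hs₂ hu₂ hs₁ q₂ q₁ hm₂ hm₁ heq.symm)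
  · rcases le_total (l₂.comp q₂).length (l₁.comp q₁).length with hlen | hlen
    · exact peak_path_path hP hs₁ hs₂ q₁ q₂ hm₁ hm₂ heq hlen
    · exact resolvesT_symm (peak_path_path hP hs₂ hs₁ q₂ q₁ hm₂ hm₁ heq.symm hlen)

lemma wf_of_no_chain {α : Type*} {r : α → α → Prop}
    (h : ¬ ∃ f : ℕ → α, ∀ n, r (f n) (f (n + 1))) :
    WellFounded (fun a b => r b a) := by
  by_contra hwf
  apply h
  obtain ⟨x₀, hx₀⟩ := not_forall.mp fun h' => hwf ⟨h'⟩
  have step : ∀ x, ¬ Acc (fun a b => r b a) x →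
      ∃ y, r x y ∧ ¬ Acc (fun a b => r b a) y := by
    intro x hx
    by_contra hc
    push_neg at hc
    exact hx (Acc.intro x fun y hy => hc y hy)
  choose! next hr hn using step
  let g : ℕ → {x : α // ¬ Acc (fun a b => r b a) x} := fun n =>
    Nat.rec ⟨x₀, hx₀⟩ (fun _ p => ⟨next p.1, hn p.1 p.2⟩) n
  exact ⟨fun n => (g n).1, fun n => hr (g n).1 (g n).2⟩

lemma newman (wf : WellFounded (fun a b : Tagged X F => Red RT RP b a))
    (lc : ∀ t u₁ u₂ : Tagged X F, Red RT RP t u₁ → Red RT RP t u₂ → ResolvesT RT RP u₁ u₂) :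
    ∀ t u₁ u₂ : Tagged X F, ReflTransGen (Red RT RP) t u₁ →
      ReflTransGen (Red RT RP) t u₂ → ResolvesT RT RP u₁ u₂ := by
  intro t
  induction t using WellFounded.induction wf with
  | _ t ih =>
    intro u₁ u₂ h₁ h₂
    rcases h₁.cases_head with rfl | ⟨t₁, ht₁, h₁'⟩
    · exact ⟨u₂, h₂, .refl⟩
    rcases h₂.cases_head with rfl | ⟨t₂, ht₂, h₂'⟩
    · exact ⟨u₁, .refl, h₁⟩
    obtain ⟨v, hv₁, hv₂⟩ := lc t t₁ t₂ ht₁ ht₂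
    obtain ⟨w, hw₁, hw₂⟩ := ih t₁ ht₁ u₁ v h₁' hv₁
    obtain ⟨z, hz₁, hz₂⟩ := ih t₂ ht₂ u₂ w h₂' (hv₂.trans hw₂)
    exact ⟨z, hw₁.trans hz₂, hz₁⟩

end Main


/-- If all critical pairs resulting from overlaps between rules of `R` resolve, then all
critical pairs of `→_R` resolve; in particular `→_R` is locally confluent, and hence
confluent whenever it is additionally Noetherian. -/
theorem stmt6 (RT : Set (Tagged X F × Tagged X F)) (RP : Set (PathPair Δ))
    (hRT : ∀ p ∈ RT, Tagged.tau p.1 = Tagged.tau p.2)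
    (hT : ∀ c₁ c₂ : Tagged X F, OverlapPairT RT RP c₁ c₂ → ResolvesT RT RP c₁ c₂)
    (hP : ∀ (a b : Δ) (c₁ c₂ : Quiver.Path a b), OverlapPairP RP c₁ c₂ → ResolvesP RP c₁ c₂) :
    (∀ t₁ t₂ : Tagged X F, (∃ t, Red RT RP t t₁ ∧ Red RT RP t t₂) → ResolvesT RT RP t₁ t₂) ∧
    (∀ t u₁ u₂ : Tagged X F, Red RT RP t u₁ → Red RT RP t u₂ → ResolvesT RT RP u₁ u₂) ∧
    ((¬ ∃ f : ℕ → Tagged X F, ∀ n, Red RT RP (f n) (f (n + 1))) →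
      ∀ t u₁ u₂ : Tagged X F, Relation.ReflTransGen (Red RT RP) t u₁ →
        Relation.ReflTransGen (Red RT RP) t u₂ → ResolvesT RT RP u₁ u₂) := by
  have lc : ∀ t u₁ u₂ : Tagged X F, Red RT RP t u₁ → Red RT RP t u₂ →
      ResolvesT RT RP u₁ u₂ := fun _ _ _ h1 h2 => local_confluence hT hP h1 h2
  refine ⟨fun t₁ t₂ ⟨t, h1, h2⟩ => lc t _ _ h1 h2, lc, fun hnoe => newman (wf_of_no_chain hnoe) lc⟩
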